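/- Fix integers n, m and r with 1 ≤ r ≤ min(n,m), and let B be any n×m real matrix. Then there exists a constant C > 0 (depending only on B, n, m, r) such that for all n×m real matrices W and W' of rank r satisfying ‖W − W'‖_F ≤ s_min(W)/2, one has ‖P_W(B) − P_{W'}(B)‖_F ≤ C · s_min(W)⁻¹ · ‖W − W'‖_F. -/

import Mathlib

open Matrix

noncomputable def frobNorm {n m : ℕ} (M : Matrix (Fin n) (Fin m) ℝ) : ℝ :=
  Real.sqrt (∑ i, ∑ j, (M i j) ^ 2)

/-- The matrix of the orthogonal projection onto the column space of `W`,
in the standard basis of Euclidean space. -/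
noncomputable def colProj {n m : ℕ} (W : Matrix (Fin n) (Fin m) ℝ) :
    Matrix (Fin n) (Fin n) ℝ :=
  LinearMap.toMatrix (EuclideanSpace.basisFun (Fin n) ℝ).toBasis
    (EuclideanSpace.basisFun (Fin n) ℝ).toBasis
    ((LinearMap.range (Matrix.toEuclideanLin W)).subtype ∘ₗ
      (Submodule.orthogonalProjectionOnto (LinearMap.range (Matrix.toEuclideanLin W))).toLinearMap)

/-- The matrix of the orthogonal projection onto the row space of `W`. -/
noncomputable def rowProj {n m : ℕ} (W : Matrix (Fin n) (Fin m) ℝ) :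
    Matrix (Fin m) (Fin m) ℝ :=
  colProj Wᵀ

/-- Tangent-space projection of the rank-`r` matrix manifold at `W`. -/
noncomputable def tangentProj {n m : ℕ} (W B : Matrix (Fin n) (Fin m) ℝ) :
    Matrix (Fin n) (Fin m) ℝ :=
  colProj W * B + B * rowProj W - colProj W * B * rowProj W

/-- The smallest positive singular value of `W`: the infimum of `‖Wx‖` over unit
vectors `x` orthogonal to the kernel of `W`. -/
noncomputable def sMin {n m : ℕ} (W : Matrix (Fin n) (Fin m) ℝ) : ℝ :=
  sInf {c : ℝ | ∃ x : EuclideanSpace ℝ (Fin m), ‖x‖ = 1 ∧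
    x ∈ (LinearMap.ker (Matrix.toEuclideanLin W))ᗮ ∧ c = ‖Matrix.toEuclideanLin W x‖}

noncomputable def matCLM {n m : ℕ} (M : Matrix (Fin n) (Fin m) ℝ) :
    EuclideanSpace ℝ (Fin m) →L[ℝ] EuclideanSpace ℝ (Fin n) :=
  LinearMap.toContinuousLinearMap (Matrix.toEuclideanLin M)

lemma matCLM_apply {n m : ℕ} (M : Matrix (Fin n) (Fin m) ℝ) (x : EuclideanSpace ℝ (Fin m)) :
    matCLM M x = Matrix.toEuclideanLin M x := rfl

lemma frobNorm_nonneg {n m : ℕ} (M : Matrix (Fin n) (Fin m) ℝ) : 0 ≤ frobNorm M :=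
  Real.sqrt_nonneg _

lemma frobNorm_pos {n m : ℕ} {M : Matrix (Fin n) (Fin m) ℝ} (h : M ≠ 0) : 0 < frobNorm M := by
  rcases (frobNorm_nonneg M).lt_or_eq with h' | h'
  · exact h'
  exfalso; apply h
  have hs : ∑ i, ∑ j, (M i j) ^ 2 = 0 := by
    have h0 : 0 ≤ ∑ i, ∑ j, (M i j) ^ 2 := by positivity
    rcases h0.lt_or_eq with hlt | heq
    · exact absurd (Real.sqrt_pos.2 hlt) (by unfold frobNorm at h'; rw [← h']; exact lt_irrefl _)
    · exact heq.symm
  ext i j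
  have h1 := (Finset.sum_eq_zero_iff_of_nonneg (fun i _ => by positivity)).1 hs i (Finset.mem_univ i)
  have h2 := (Finset.sum_eq_zero_iff_of_nonneg (fun j _ => by positivity)).1 h1 j (Finset.mem_univ j)
  simpa using pow_eq_zero_iff (n := 2) (by norm_num) |>.1 h2

lemma frobNorm_transpose {n m : ℕ} (M : Matrix (Fin n) (Fin m) ℝ) :
    frobNorm Mᵀ = frobNorm M := by
  unfold frobNorm
  rw [Finset.sum_comm]
  simp [Matrix.transpose_apply]

lemma euclidean_comp_le_norm {k : ℕ} (v : EuclideanSpace ℝ (Fin k)) (i : Fin k) :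
    |v i| ≤ ‖v‖ := by
  rw [EuclideanSpace.norm_eq]
  rw [show |v i| = Real.sqrt ((v i)^2) by rw [Real.sqrt_sq_eq_abs]]
  apply Real.sqrt_le_sqrt
  calc (v i)^2 = ‖v i‖^2 := by rw [Real.norm_eq_abs, sq_abs]
  _ ≤ ∑ j, ‖v j‖^2 := Finset.single_le_sum (f := fun j => ‖v j‖^2) (fun j _ => by positivity) (Finset.mem_univ i)

lemma toEuclideanLin_apply' {n m : ℕ} (M : Matrix (Fin n) (Fin m) ℝ)
    (x : EuclideanSpace ℝ (Fin m)) (i : Fin n) :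
    (Matrix.toEuclideanLin M x) i = ∑ j, M i j * x j := by
  rfl

lemma opNorm_le_frobNorm {n m : ℕ} (M : Matrix (Fin n) (Fin m) ℝ) :
    ‖matCLM M‖ ≤ frobNorm M := by
  apply ContinuousLinearMap.opNorm_le_bound _ (frobNorm_nonneg M)
  intro x
  rw [matCLM_apply]
  have hx : 0 ≤ ‖x‖ := norm_nonneg x
  have hfx : 0 ≤ frobNorm M := frobNorm_nonneg M
  rw [EuclideanSpace.norm_eq]
  have hb : ∑ i, ‖(Matrix.toEuclideanLin M x) i‖^2 ≤ (frobNorm M * ‖x‖)^2 := by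
    have hstep : ∀ i : Fin n, ‖(Matrix.toEuclideanLin M x) i‖^2 ≤
        (∑ j, (M i j)^2) * (∑ j, (x j)^2) := by
      intro i
      rw [toEuclideanLin_apply', Real.norm_eq_abs, sq_abs]
      exact Finset.sum_mul_sq_le_sq_mul_sq Finset.univ (fun j => M i j) (fun j => x j)
    calc ∑ i, ‖(Matrix.toEuclideanLin M x) i‖^2
        ≤ ∑ i, (∑ j, (M i j)^2) * (∑ j, (x j)^2) := Finset.sum_le_sum (fun i _ => hstep i)
      _ = (∑ i, ∑ j, (M i j)^2) * (∑ j, (x j)^2) := by rw [Finset.sum_mul]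
      _ = (frobNorm M)^2 * ‖x‖^2 := by
          rw [show (frobNorm M)^2 = ∑ i, ∑ j, (M i j)^2 by
              rw [frobNorm, Real.sq_sqrt (by positivity)]]
          congr 1
          rw [EuclideanSpace.norm_eq, Real.sq_sqrt (by positivity)]
          congr 1; ext j; rw [Real.norm_eq_abs, sq_abs]
      _ = (frobNorm M * ‖x‖)^2 := by ring
  calc Real.sqrt (∑ i, ‖(Matrix.toEuclideanLin M x) i‖^2)
      ≤ Real.sqrt ((frobNorm M * ‖x‖)^2) := Real.sqrt_le_sqrt hb
    _ = frobNorm M * ‖x‖ := Real.sqrt_sq (by positivity)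

lemma frobNorm_le_opNorm {n m : ℕ} (M : Matrix (Fin n) (Fin m) ℝ) :
    frobNorm M ≤ Real.sqrt (n * m) * ‖matCLM M‖ := by
  have hentry : ∀ i j, (M i j)^2 ≤ ‖matCLM M‖^2 := by
    intro i j
    have h1 : |M i j| ≤ ‖matCLM M (EuclideanSpace.single j 1)‖ := by
      have := euclidean_comp_le_norm (matCLM M (EuclideanSpace.single j 1)) i
      rw [matCLM_apply, toEuclideanLin_apply'] at this
      simpa [EuclideanSpace.single_apply, matCLM_apply] using this
    have h2 : ‖matCLM M (EuclideanSpace.single j 1)‖ ≤ ‖matCLM M‖ := by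
      calc ‖matCLM M (EuclideanSpace.single j 1)‖
          ≤ ‖matCLM M‖ * ‖EuclideanSpace.single j (1:ℝ)‖ := (matCLM M).le_opNorm _
        _ = ‖matCLM M‖ := by rw [EuclideanSpace.norm_single]; simp
    calc (M i j)^2 = |M i j|^2 := (sq_abs _).symm
      _ ≤ ‖matCLM M‖^2 := by
          apply pow_le_pow_left₀ (abs_nonneg _) (h1.trans h2)
  rw [frobNorm]
  calc Real.sqrt (∑ i, ∑ j, (M i j)^2)
      ≤ Real.sqrt (∑ _i : Fin n, ∑ _j : Fin m, ‖matCLM M‖^2) := by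
        apply Real.sqrt_le_sqrt
        apply Finset.sum_le_sum; intro i _
        apply Finset.sum_le_sum; intro j _
        exact hentry i j
    _ = Real.sqrt ((n * m : ℝ) * ‖matCLM M‖^2) := by
        simp [Finset.sum_const]; ring_nf
    _ = Real.sqrt (n * m) * ‖matCLM M‖ := by
        rw [Real.sqrt_mul (by positivity), Real.sqrt_sq (norm_nonneg _)]

noncomputable def projCLM {k : ℕ} (K : Submodule ℝ (EuclideanSpace ℝ (Fin k))) :
    EuclideanSpace ℝ (Fin k) →L[ℝ] EuclideanSpace ℝ (Fin k) :=
  K.subtypeL ∘L Submodule.orthogonalProjectionOnto K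

lemma projCLM_apply {k : ℕ} (K : Submodule ℝ (EuclideanSpace ℝ (Fin k)))
    (x : EuclideanSpace ℝ (Fin k)) : projCLM K x = (Submodule.orthogonalProjectionOnto K x : _) := rfl

lemma projCLM_mem {k : ℕ} (K : Submodule ℝ (EuclideanSpace ℝ (Fin k)))
    (x : EuclideanSpace ℝ (Fin k)) : projCLM K x ∈ K := (Submodule.orthogonalProjectionOnto K x).2

lemma norm_projCLM_apply_le {k : ℕ} (K : Submodule ℝ (EuclideanSpace ℝ (Fin k)))
    (x : EuclideanSpace ℝ (Fin k)) : ‖projCLM K x‖ ≤ ‖x‖ := by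
  rw [projCLM_apply]
  calc ‖(Submodule.orthogonalProjectionOnto K x : _)‖ = ‖Submodule.orthogonalProjectionOnto K x‖ := rfl
    _ ≤ ‖Submodule.orthogonalProjectionOnto K‖ * ‖x‖ := (Submodule.orthogonalProjectionOnto K).le_opNorm x
    _ ≤ 1 * ‖x‖ := by
        apply mul_le_mul_of_nonneg_right (Submodule.orthogonalProjectionOnto_norm_le K) (norm_nonneg x)
    _ = ‖x‖ := one_mul _

lemma projCLM_eq_self {k : ℕ} {K : Submodule ℝ (EuclideanSpace ℝ (Fin k))}
    {x : EuclideanSpace ℝ (Fin k)} (hx : x ∈ K) : projCLM K x = x := by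
  rw [show projCLM K x = K.starProjection x from rfl, Submodule.starProjection_eq_self_iff]; exact hx

lemma projCLM_minimal {k : ℕ} (K : Submodule ℝ (EuclideanSpace ℝ (Fin k)))
    (x : EuclideanSpace ℝ (Fin k)) {w : EuclideanSpace ℝ (Fin k)} (hw : w ∈ K) :
    ‖x - projCLM K x‖ ≤ ‖x - w‖ := by
  rw [show projCLM K x = K.starProjection x from rfl, Submodule.starProjection_minimal]
  exact ciInf_le ⟨0, fun a ⟨u, hu⟩ => hu ▸ norm_nonneg _⟩ (⟨w, hw⟩ : K)

lemma projCLM_isSelfAdjoint {k : ℕ} (K : Submodule ℝ (EuclideanSpace ℝ (Fin k))) :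
    IsSelfAdjoint (projCLM K) := isSelfAdjoint_starProjection K

lemma norm_comp_one_sub_projCLM {k : ℕ} (K K' : Submodule ℝ (EuclideanSpace ℝ (Fin k))) :
    ‖projCLM K ∘L (1 - projCLM K')‖ = ‖(1 - projCLM K') ∘L projCLM K‖ := by
  have hK : ContinuousLinearMap.adjoint (projCLM K) = projCLM K :=
    (projCLM_isSelfAdjoint K).adjoint_eq
  have hK' : ContinuousLinearMap.adjoint (1 - projCLM K') = 1 - projCLM K' :=
    ((IsSelfAdjoint.one _).sub (projCLM_isSelfAdjoint K')).adjoint_eq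
  have h1 : ContinuousLinearMap.adjoint (projCLM K ∘L (1 - projCLM K')) =
      (1 - projCLM K') ∘L projCLM K := by
    rw [ContinuousLinearMap.adjoint_comp, hK, hK']
  rw [← h1]
  exact (ContinuousLinearMap.adjoint.norm_map _).symm

lemma proj_diff_opnorm_le {k : ℕ} (U U' : Submodule ℝ (EuclideanSpace ℝ (Fin k)))
    (hdim : Module.finrank ℝ U = Module.finrank ℝ U') {δ : ℝ} (hδ0 : 0 ≤ δ) (hδ : δ ≤ 1/2)
    (hUU' : ∀ u ∈ U, ‖u - projCLM U' u‖ ≤ δ * ‖u‖) :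
    ‖projCLM U - projCLM U'‖ ≤ 3 * δ := by
  have hA : ‖(1 - projCLM U') ∘L projCLM U‖ ≤ δ := by
    apply ContinuousLinearMap.opNorm_le_bound _ hδ0
    intro x
    have h1 := hUU' (projCLM U x) (projCLM_mem U x)
    calc ‖((1 - projCLM U') ∘L projCLM U) x‖
        = ‖projCLM U x - projCLM U' (projCLM U x)‖ := by
          simp [ContinuousLinearMap.comp_apply, ContinuousLinearMap.sub_apply]
      _ ≤ δ * ‖projCLM U x‖ := h1
      _ ≤ δ * ‖x‖ := mul_le_mul_of_nonneg_left (norm_projCLM_apply_le U x) hδ0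
  -- surjectivity of the restricted projection
  have hsurj : ∀ v' : EuclideanSpace ℝ (Fin k), v' ∈ U' → ∃ u ∈ U, projCLM U' u = v' := by
    have φinj : Function.Injective
        (((Submodule.orthogonalProjectionOnto U').toLinearMap).comp U.subtype) := by
      rw [← LinearMap.ker_eq_bot, LinearMap.ker_eq_bot']
      intro u hu
      have h0 : projCLM U' (u : EuclideanSpace ℝ (Fin k)) = 0 := by
        have : (Submodule.orthogonalProjectionOnto U') (u : EuclideanSpace ℝ (Fin k)) = 0 := hu
        rw [projCLM_apply, this]; rfl
      have h1 := hUU' (u : EuclideanSpace ℝ (Fin k)) u.2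
      rw [h0, sub_zero] at h1
      have hd : δ * ‖(u : EuclideanSpace ℝ (Fin k))‖ ≤
          (1/2) * ‖(u : EuclideanSpace ℝ (Fin k))‖ :=
        mul_le_mul_of_nonneg_right hδ (norm_nonneg _)
      have : ‖(u : EuclideanSpace ℝ (Fin k))‖ = 0 := by
        have hn := norm_nonneg (u : EuclideanSpace ℝ (Fin k))
        linarith
      exact ZeroMemClass.coe_eq_zero.1 (norm_eq_zero.1 this)
    have φsurj := (LinearMap.injective_iff_surjective_of_finrank_eq_finrank hdim).1 φinj
    intro v' hv'
    obtain ⟨u, hu⟩ := φsurj ⟨v', hv'⟩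
    refine ⟨u, u.2, ?_⟩
    have := congrArg (fun z : U' => (z : EuclideanSpace ℝ (Fin k))) hu
    simpa [projCLM_apply] using this
  have hclaim : ∀ v' : EuclideanSpace ℝ (Fin k), v' ∈ U' →
      ‖v' - projCLM U v'‖ ≤ 2 * δ * ‖v'‖ := by
    intro v' hv'
    obtain ⟨u, huU, hu⟩ := hsurj v' hv'
    have h1 : ‖u - v'‖ ≤ δ * ‖u‖ := by rw [← hu]; exact hUU' u huU
    have h2 : ‖u‖ ≤ 2 * ‖v'‖ := by
      have h3 : ‖u‖ ≤ ‖v'‖ + ‖u - v'‖ := by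
        calc ‖u‖ = ‖v' + (u - v')‖ := by rw [add_sub_cancel]
          _ ≤ ‖v'‖ + ‖u - v'‖ := norm_add_le _ _
      have hd : δ * ‖u‖ ≤ (1/2) * ‖u‖ := mul_le_mul_of_nonneg_right hδ (norm_nonneg _)
      linarith
    calc ‖v' - projCLM U v'‖ ≤ ‖v' - u‖ := projCLM_minimal U v' huU
      _ = ‖u - v'‖ := norm_sub_rev _ _
      _ ≤ δ * ‖u‖ := h1
      _ ≤ δ * (2 * ‖v'‖) := mul_le_mul_of_nonneg_left h2 hδ0
      _ = 2 * δ * ‖v'‖ := by ring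
  have hB : ‖(1 - projCLM U) ∘L projCLM U'‖ ≤ 2 * δ := by
    apply ContinuousLinearMap.opNorm_le_bound _ (by linarith)
    intro x
    calc ‖((1 - projCLM U) ∘L projCLM U') x‖
        = ‖projCLM U' x - projCLM U (projCLM U' x)‖ := by
          simp [ContinuousLinearMap.comp_apply, ContinuousLinearMap.sub_apply]
      _ ≤ 2 * δ * ‖projCLM U' x‖ := hclaim _ (projCLM_mem U' x)
      _ ≤ 2 * δ * ‖x‖ := mul_le_mul_of_nonneg_left (norm_projCLM_apply_le U' x) (by linarith)
  have hid : projCLM U - projCLM U' =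
      projCLM U ∘L (1 - projCLM U') - (1 - projCLM U) ∘L projCLM U' := by
    ext x
    simp [ContinuousLinearMap.comp_apply, ContinuousLinearMap.sub_apply]
  calc ‖projCLM U - projCLM U'‖
      = ‖projCLM U ∘L (1 - projCLM U') - (1 - projCLM U) ∘L projCLM U'‖ := by rw [hid]
    _ ≤ ‖projCLM U ∘L (1 - projCLM U')‖ + ‖(1 - projCLM U) ∘L projCLM U'‖ := norm_sub_le _ _
    _ = ‖(1 - projCLM U') ∘L projCLM U‖ + ‖(1 - projCLM U) ∘L projCLM U'‖ := by
        rw [norm_comp_one_sub_projCLM]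
    _ ≤ δ + 2 * δ := add_le_add hA hB
    _ = 3 * δ := by ring

lemma matCLM_colProj {n m : ℕ} (W : Matrix (Fin n) (Fin m) ℝ) :
    matCLM (colProj W) = projCLM (LinearMap.range (Matrix.toEuclideanLin W)) := by
  have h : Matrix.toEuclideanLin (colProj W) =
      (LinearMap.range (Matrix.toEuclideanLin W)).subtype ∘ₗ
        (Submodule.orthogonalProjectionOnto (LinearMap.range (Matrix.toEuclideanLin W))).toLinearMap := by
    rw [show (Matrix.toEuclideanLin : Matrix (Fin n) (Fin n) ℝ ≃ₗ[ℝ] _) =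
        Matrix.toLin (EuclideanSpace.basisFun (Fin n) ℝ).toBasis
          (EuclideanSpace.basisFun (Fin n) ℝ).toBasis from
        Matrix.toEuclideanLin_eq_toLin_orthonormal]
    exact Matrix.toLin_toMatrix _ _ _
  ext x
  rw [matCLM_apply, h]
  rfl

lemma finrank_range_toEuclideanLin {n m : ℕ} (W : Matrix (Fin n) (Fin m) ℝ) :
    Module.finrank ℝ (LinearMap.range (Matrix.toEuclideanLin W)) = W.rank := by
  rw [show (Matrix.toEuclideanLin : Matrix (Fin n) (Fin m) ℝ ≃ₗ[ℝ] _) =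
      Matrix.toLin (EuclideanSpace.basisFun (Fin m) ℝ).toBasis
        (EuclideanSpace.basisFun (Fin n) ℝ).toBasis from
      Matrix.toEuclideanLin_eq_toLin_orthonormal]
  exact (Matrix.rank_eq_finrank_range_toLin W _ _).symm

lemma sMin_nonneg {n m : ℕ} (W : Matrix (Fin n) (Fin m) ℝ) : 0 ≤ sMin W :=
  Real.sInf_nonneg (fun c hc => by obtain ⟨x, _, _, rfl⟩ := hc; exact norm_nonneg _)

lemma sMin_mul_norm_le {n m : ℕ} (W : Matrix (Fin n) (Fin m) ℝ)
    {x : EuclideanSpace ℝ (Fin m)} (hx : x ∈ (LinearMap.ker (Matrix.toEuclideanLin W))ᗮ) :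
    sMin W * ‖x‖ ≤ ‖Matrix.toEuclideanLin W x‖ := by
  rcases eq_or_ne x 0 with rfl | hx0
  · simp
  · have hnx : 0 < ‖x‖ := norm_pos_iff.2 hx0
    have hu1 : ‖(‖x‖⁻¹ • x : EuclideanSpace ℝ (Fin m))‖ = 1 := norm_smul_inv_norm hx0
    have huK : (‖x‖⁻¹ • x : EuclideanSpace ℝ (Fin m)) ∈
        (LinearMap.ker (Matrix.toEuclideanLin W))ᗮ := Submodule.smul_mem _ _ hx
    have h1 : sMin W ≤ ‖Matrix.toEuclideanLin W (‖x‖⁻¹ • x)‖ :=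
      csInf_le ⟨0, fun c hc => by obtain ⟨y, _, _, rfl⟩ := hc; exact norm_nonneg _⟩
        ⟨‖x‖⁻¹ • x, hu1, huK, rfl⟩
    have h2 : ‖Matrix.toEuclideanLin W (‖x‖⁻¹ • x)‖ =
        ‖x‖⁻¹ * ‖Matrix.toEuclideanLin W x‖ := by
      rw [_root_.map_smul, norm_smul, Real.norm_eq_abs, abs_of_pos (by positivity)]
    calc sMin W * ‖x‖ ≤ (‖x‖⁻¹ * ‖Matrix.toEuclideanLin W x‖) * ‖x‖ :=
          mul_le_mul_of_nonneg_right (h1.trans_eq h2) hnx.le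
      _ = ‖Matrix.toEuclideanLin W x‖ := by field_simp

lemma ker_adjoint_eq {n m : ℕ} (T : EuclideanSpace ℝ (Fin m) →ₗ[ℝ] EuclideanSpace ℝ (Fin n)) :
    LinearMap.ker (LinearMap.adjoint T) = (LinearMap.range T)ᗮ := by
  ext y
  rw [LinearMap.mem_ker, Submodule.mem_orthogonal]
  constructor
  · rintro h u ⟨v, rfl⟩
    rw [← LinearMap.adjoint_inner_right, h, inner_zero_right]
  · intro h
    rw [← inner_self_eq_zero (𝕜 := ℝ)]
    calc (inner ℝ (LinearMap.adjoint T y) (LinearMap.adjoint T y) : ℝ)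
        = inner ℝ y (T (LinearMap.adjoint T y)) := LinearMap.adjoint_inner_left T _ y
      _ = inner ℝ (T (LinearMap.adjoint T y)) y := real_inner_comm _ _
      _ = 0 := h _ ⟨LinearMap.adjoint T y, rfl⟩

lemma ker_transpose_orthogonal {n m : ℕ} (W : Matrix (Fin n) (Fin m) ℝ) :
    (LinearMap.ker (Matrix.toEuclideanLin Wᵀ))ᗮ =
      LinearMap.range (Matrix.toEuclideanLin W) := by
  have h1 : Matrix.toEuclideanLin Wᵀ = LinearMap.adjoint (Matrix.toEuclideanLin W) := by
    rw [← Matrix.conjTranspose_eq_transpose_of_trivial]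
    exact Matrix.toEuclideanLin_conjTranspose_eq_adjoint W
  rw [h1, ker_adjoint_eq, Submodule.orthogonal_orthogonal]

lemma sMin_le_sMin_transpose {n m : ℕ} (W : Matrix (Fin n) (Fin m) ℝ)
    (hrank : 0 < W.rank) : sMin W ≤ sMin Wᵀ := by
  apply le_csInf
  · -- the defining set for `sMin Wᵀ` is nonempty
    have hne : LinearMap.range (Matrix.toEuclideanLin W) ≠ ⊥ := by
      intro hbot
      rw [← finrank_range_toEuclideanLin] at hrank
      rw [hbot] at hrank
      simp at hrank
    obtain ⟨u, huR, hu0⟩ := Submodule.exists_mem_ne_zero_of_ne_bot hne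
    refine ⟨‖Matrix.toEuclideanLin Wᵀ (‖u‖⁻¹ • u)‖, ‖u‖⁻¹ • u, norm_smul_inv_norm hu0, ?_, rfl⟩
    rw [ker_transpose_orthogonal]
    exact Submodule.smul_mem _ _ huR
  · rintro c ⟨y, hy1, hyK, rfl⟩
    rw [ker_transpose_orthogonal] at hyK
    obtain ⟨x₀, hx₀⟩ := hyK
    -- replace x₀ by its component orthogonal to the kernel
    obtain ⟨z, hz, x, hx, hdecomp⟩ :=
      (LinearMap.ker (Matrix.toEuclideanLin W)).exists_add_mem_mem_orthogonal x₀
    have hTx : Matrix.toEuclideanLin W x = y := by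
      have : Matrix.toEuclideanLin W x₀ = y := hx₀
      rw [← this, hdecomp, map_add, LinearMap.mem_ker.1 hz, zero_add]
    have hx0 : x ≠ 0 := by
      intro h0
      rw [h0, map_zero] at hTx
      rw [← hTx] at hy1
      simp at hy1
    have hnx : 0 < ‖x‖ := norm_pos_iff.2 hx0
    have h1 : sMin W * ‖x‖ ≤ 1 := by
      have := sMin_mul_norm_le W hx
      rwa [hTx, hy1] at this
    have h2 : (1 : ℝ) ≤ ‖x‖ * ‖Matrix.toEuclideanLin Wᵀ y‖ := by
      have hadj : Matrix.toEuclideanLin Wᵀ = LinearMap.adjoint (Matrix.toEuclideanLin W) := by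
        rw [← Matrix.conjTranspose_eq_transpose_of_trivial]
        exact Matrix.toEuclideanLin_conjTranspose_eq_adjoint W
      have hinner : (inner ℝ x (Matrix.toEuclideanLin Wᵀ y) : ℝ) = 1 := by
        rw [hadj, LinearMap.adjoint_inner_right, hTx]
        rw [real_inner_self_eq_norm_sq, hy1]; norm_num
      calc (1 : ℝ) = inner ℝ x (Matrix.toEuclideanLin Wᵀ y) := hinner.symm
        _ ≤ ‖x‖ * ‖Matrix.toEuclideanLin Wᵀ y‖ := real_inner_le_norm _ _
    -- conclude: sMin W ≤ 1/‖x‖ ≤ ‖Wᵀ y‖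
    have h3 : sMin W ≤ 1 / ‖x‖ := by
      rw [le_div_iff₀ hnx]; exact h1
    have h4 : 1 / ‖x‖ ≤ ‖Matrix.toEuclideanLin Wᵀ y‖ := by
      rw [div_le_iff₀ hnx]
      calc (1:ℝ) ≤ ‖x‖ * ‖Matrix.toEuclideanLin Wᵀ y‖ := h2
        _ = ‖Matrix.toEuclideanLin Wᵀ y‖ * ‖x‖ := mul_comm _ _
    exact h3.trans h4

lemma matCLM_sub {n m : ℕ} (X Y : Matrix (Fin n) (Fin m) ℝ) :
    matCLM (X - Y) = matCLM X - matCLM Y := by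
  ext x
  simp only [matCLM_apply, ContinuousLinearMap.sub_apply, map_sub, LinearMap.sub_apply]

lemma matCLM_add {n m : ℕ} (X Y : Matrix (Fin n) (Fin m) ℝ) :
    matCLM (X + Y) = matCLM X + matCLM Y := by
  ext x
  simp only [matCLM_apply, ContinuousLinearMap.add_apply, map_add, LinearMap.add_apply]

lemma matCLM_mul {n k m : ℕ} (X : Matrix (Fin n) (Fin k) ℝ) (Y : Matrix (Fin k) (Fin m) ℝ) :
    matCLM (X * Y) = matCLM X ∘L matCLM Y := by
  ext x
  simp [matCLM_apply, Matrix.toEuclideanLin_apply, Matrix.mulVec_mulVec]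

lemma colProj_diff_bound {n m : ℕ} (W W' : Matrix (Fin n) (Fin m) ℝ)
    (hrk : W.rank = W'.rank) (hσ : 0 < sMin W)
    (hclose : frobNorm (W - W') ≤ sMin W / 2) :
    ‖matCLM (colProj W) - matCLM (colProj W')‖ ≤ 3 * (frobNorm (W - W') / sMin W) := by
  rw [matCLM_colProj, matCLM_colProj]
  apply proj_diff_opnorm_le
  · rw [finrank_range_toEuclideanLin, finrank_range_toEuclideanLin, hrk]
  · exact div_nonneg (frobNorm_nonneg _) hσ.le
  · rw [div_le_iff₀ hσ]; linarith
  · intro u hu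
    obtain ⟨x₀, hx₀⟩ := hu
    obtain ⟨z, hz, x, hx, hdecomp⟩ :=
      (LinearMap.ker (Matrix.toEuclideanLin W)).exists_add_mem_mem_orthogonal x₀
    have hTx : Matrix.toEuclideanLin W x = u := by
      rw [← hx₀, hdecomp, map_add, LinearMap.mem_ker.1 hz, zero_add]
    have hxu : sMin W * ‖x‖ ≤ ‖u‖ := by
      have := sMin_mul_norm_le W hx
      rwa [hTx] at this
    have hmem' : Matrix.toEuclideanLin W' x ∈ LinearMap.range (Matrix.toEuclideanLin W') :=
      ⟨x, rfl⟩
    calc ‖u - projCLM (LinearMap.range (Matrix.toEuclideanLin W')) u‖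
        ≤ ‖u - Matrix.toEuclideanLin W' x‖ := projCLM_minimal _ u hmem'
      _ = ‖matCLM (W - W') x‖ := by
          rw [matCLM_apply, map_sub, LinearMap.sub_apply, hTx]
      _ ≤ ‖matCLM (W - W')‖ * ‖x‖ := (matCLM (W - W')).le_opNorm x
      _ ≤ frobNorm (W - W') * ‖x‖ :=
          mul_le_mul_of_nonneg_right (opNorm_le_frobNorm _) (norm_nonneg x)
      _ ≤ frobNorm (W - W') / sMin W * ‖u‖ := by
          rw [div_mul_eq_mul_div, le_div_iff₀ hσ]
          calc frobNorm (W - W') * ‖x‖ * sMin W = frobNorm (W - W') * (sMin W * ‖x‖) := by ring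
            _ ≤ frobNorm (W - W') * ‖u‖ :=
                mul_le_mul_of_nonneg_left hxu (frobNorm_nonneg _)
            _ = frobNorm (W - W') * ‖u‖ := rfl

lemma opNorm_matCLM_colProj_le {n m : ℕ} (W : Matrix (Fin n) (Fin m) ℝ) :
    ‖matCLM (colProj W)‖ ≤ 1 := by
  rw [matCLM_colProj]
  apply ContinuousLinearMap.opNorm_le_bound _ zero_le_one
  intro x
  rw [one_mul]
  exact norm_projCLM_apply_le _ x

theorem curvature_bound {n m r : ℕ} (hr1 : 1 ≤ r) (hrn : r ≤ n) (hrm : r ≤ m)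
    (B : Matrix (Fin n) (Fin m) ℝ) :
    ∃ C : ℝ, 0 < C ∧ ∀ W W' : Matrix (Fin n) (Fin m) ℝ,
      W.rank = r → W'.rank = r → frobNorm (W - W') ≤ sMin W / 2 →
        frobNorm (tangentProj W B - tangentProj W' B) ≤
          C * (sMin W)⁻¹ * frobNorm (W - W') := by
  refine ⟨12 * Real.sqrt ((n : ℝ) * m) * ‖matCLM B‖ + 1, by positivity, ?_⟩
  intro W W' hW hW' hclose
  by_cases hWW : W = W'
  · subst hWW
    simp only [sub_self]
    have h0 : frobNorm (0 : Matrix (Fin n) (Fin m) ℝ) = 0 := by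
      simp [frobNorm]
    simp [h0]
  · have hf : 0 < frobNorm (W - W') := frobNorm_pos (sub_ne_zero.2 hWW)
    have hσ : 0 < sMin W := by linarith
    have hrk : W.rank = W'.rank := by rw [hW, hW']
    have hrank0 : 0 < W.rank := by rw [hW]; exact hr1
    -- column projection bound
    have hc : ‖matCLM (colProj W) - matCLM (colProj W')‖ ≤
        3 * (frobNorm (W - W') / sMin W) := colProj_diff_bound W W' hrk hσ hclose
    -- row projection bound, via transposes
    have hσT : 0 < sMin Wᵀ := lt_of_lt_of_le hσ (sMin_le_sMin_transpose W hrank0)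
    have hfT : frobNorm (Wᵀ - W'ᵀ) = frobNorm (W - W') := by
      rw [← Matrix.transpose_sub, frobNorm_transpose]
    have hrkT : Wᵀ.rank = W'ᵀ.rank := by
      rw [Matrix.rank_transpose, Matrix.rank_transpose, hrk]
    have hcloseT : frobNorm (Wᵀ - W'ᵀ) ≤ sMin Wᵀ / 2 := by
      rw [hfT]
      calc frobNorm (W - W') ≤ sMin W / 2 := hclose
        _ ≤ sMin Wᵀ / 2 := by linarith [sMin_le_sMin_transpose W hrank0]
    have hrow : ‖matCLM (colProj Wᵀ) - matCLM (colProj W'ᵀ)‖ ≤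
        3 * (frobNorm (W - W') / sMin W) := by
      calc ‖matCLM (colProj Wᵀ) - matCLM (colProj W'ᵀ)‖
          ≤ 3 * (frobNorm (Wᵀ - W'ᵀ) / sMin Wᵀ) := colProj_diff_bound Wᵀ W'ᵀ hrkT hσT hcloseT
        _ ≤ 3 * (frobNorm (W - W') / sMin W) := by
            rw [hfT]
            have : frobNorm (W - W') / sMin Wᵀ ≤ frobNorm (W - W') / sMin W :=
              div_le_div_of_nonneg_left (frobNorm_nonneg _) hσ
                (sMin_le_sMin_transpose W hrank0)
            linarith
    -- the matrix identity
    set Dc := colProj W - colProj W' with hDc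
    set Dr := rowProj W - rowProj W' with hDr
    have hid : tangentProj W B - tangentProj W' B =
        Dc * B + B * Dr - Dc * B * rowProj W - colProj W' * B * Dr := by
      rw [hDc, hDr]
      unfold tangentProj rowProj
      simp only [Matrix.sub_mul, Matrix.mul_sub]
      abel
    -- operator norm bounds
    set δ := frobNorm (W - W') / sMin W with hδdef
    have hδ0 : 0 ≤ δ := div_nonneg (frobNorm_nonneg _) hσ.le
    have hB0 : 0 ≤ ‖matCLM B‖ := norm_nonneg _
    have hDcB : ‖matCLM Dc‖ ≤ 3 * δ := by rw [hDc, matCLM_sub]; exact hc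
    have hDrB : ‖matCLM Dr‖ ≤ 3 * δ := by
      rw [hDr]
      unfold rowProj
      rw [matCLM_sub]; exact hrow
    have h1 : ‖matCLM (Dc * B)‖ ≤ 3 * δ * ‖matCLM B‖ := by
      rw [matCLM_mul]
      calc ‖matCLM Dc ∘L matCLM B‖ ≤ ‖matCLM Dc‖ * ‖matCLM B‖ :=
            ContinuousLinearMap.opNorm_comp_le _ _
        _ ≤ 3 * δ * ‖matCLM B‖ := mul_le_mul_of_nonneg_right hDcB hB0
    have h2 : ‖matCLM (B * Dr)‖ ≤ 3 * δ * ‖matCLM B‖ := by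
      rw [matCLM_mul]
      calc ‖matCLM B ∘L matCLM Dr‖ ≤ ‖matCLM B‖ * ‖matCLM Dr‖ :=
            ContinuousLinearMap.opNorm_comp_le _ _
        _ ≤ ‖matCLM B‖ * (3 * δ) := mul_le_mul_of_nonneg_left hDrB hB0
        _ = 3 * δ * ‖matCLM B‖ := by ring
    have h3 : ‖matCLM (Dc * B * rowProj W)‖ ≤ 3 * δ * ‖matCLM B‖ := by
      rw [matCLM_mul, matCLM_mul]
      calc ‖(matCLM Dc ∘L matCLM B) ∘L matCLM (rowProj W)‖
          ≤ ‖matCLM Dc ∘L matCLM B‖ * ‖matCLM (rowProj W)‖ :=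
            ContinuousLinearMap.opNorm_comp_le _ _
        _ ≤ ‖matCLM Dc ∘L matCLM B‖ * 1 := by
            apply mul_le_mul_of_nonneg_left _ (norm_nonneg _)
            unfold rowProj
            exact opNorm_matCLM_colProj_le _
        _ = ‖matCLM Dc ∘L matCLM B‖ := mul_one _
        _ ≤ ‖matCLM Dc‖ * ‖matCLM B‖ := ContinuousLinearMap.opNorm_comp_le _ _
        _ ≤ 3 * δ * ‖matCLM B‖ := mul_le_mul_of_nonneg_right hDcB hB0
    have h4 : ‖matCLM (colProj W' * B * Dr)‖ ≤ 3 * δ * ‖matCLM B‖ := by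
      rw [matCLM_mul, matCLM_mul]
      calc ‖(matCLM (colProj W') ∘L matCLM B) ∘L matCLM Dr‖
          ≤ ‖matCLM (colProj W') ∘L matCLM B‖ * ‖matCLM Dr‖ :=
            ContinuousLinearMap.opNorm_comp_le _ _
        _ ≤ (‖matCLM (colProj W')‖ * ‖matCLM B‖) * ‖matCLM Dr‖ := by
            apply mul_le_mul_of_nonneg_right (ContinuousLinearMap.opNorm_comp_le _ _)
              (norm_nonneg _)
        _ ≤ (1 * ‖matCLM B‖) * ‖matCLM Dr‖ := by
            apply mul_le_mul_of_nonneg_right _ (norm_nonneg _)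
            exact mul_le_mul_of_nonneg_right (opNorm_matCLM_colProj_le _) hB0
        _ = ‖matCLM B‖ * ‖matCLM Dr‖ := by ring
        _ ≤ ‖matCLM B‖ * (3 * δ) := mul_le_mul_of_nonneg_left hDrB hB0
        _ = 3 * δ * ‖matCLM B‖ := by ring
    have hop : ‖matCLM (tangentProj W B - tangentProj W' B)‖ ≤ 12 * δ * ‖matCLM B‖ := by
      rw [hid]
      have e1 : matCLM (Dc * B + B * Dr - Dc * B * rowProj W - colProj W' * B * Dr) =
          matCLM (Dc * B) + matCLM (B * Dr) - matCLM (Dc * B * rowProj W)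
            - matCLM (colProj W' * B * Dr) := by
        rw [matCLM_sub, matCLM_sub, matCLM_add]
      rw [e1]
      calc ‖matCLM (Dc * B) + matCLM (B * Dr) - matCLM (Dc * B * rowProj W)
            - matCLM (colProj W' * B * Dr)‖
          ≤ ‖matCLM (Dc * B) + matCLM (B * Dr) - matCLM (Dc * B * rowProj W)‖
            + ‖matCLM (colProj W' * B * Dr)‖ := norm_sub_le _ _
        _ ≤ (‖matCLM (Dc * B) + matCLM (B * Dr)‖ + ‖matCLM (Dc * B * rowProj W)‖)
            + ‖matCLM (colProj W' * B * Dr)‖ := by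
            have := norm_sub_le (matCLM (Dc * B) + matCLM (B * Dr))
              (matCLM (Dc * B * rowProj W))
            linarith
        _ ≤ ((‖matCLM (Dc * B)‖ + ‖matCLM (B * Dr)‖) + ‖matCLM (Dc * B * rowProj W)‖)
            + ‖matCLM (colProj W' * B * Dr)‖ := by
            have := norm_add_le (matCLM (Dc * B)) (matCLM (B * Dr))
            linarith
        _ ≤ 12 * δ * ‖matCLM B‖ := by linarith
    -- convert to Frobenius norms
    calc frobNorm (tangentProj W B - tangentProj W' B)
        ≤ Real.sqrt ((n : ℝ) * m) * ‖matCLM (tangentProj W B - tangentProj W' B)‖ :=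
          frobNorm_le_opNorm _
      _ ≤ Real.sqrt ((n : ℝ) * m) * (12 * δ * ‖matCLM B‖) :=
          mul_le_mul_of_nonneg_left hop (Real.sqrt_nonneg _)
      _ = (12 * Real.sqrt ((n : ℝ) * m) * ‖matCLM B‖) * ((sMin W)⁻¹ * frobNorm (W - W')) := by
          rw [hδdef]; field_simp
      _ ≤ (12 * Real.sqrt ((n : ℝ) * m) * ‖matCLM B‖ + 1) * ((sMin W)⁻¹ * frobNorm (W - W')) := by
          apply mul_le_mul_of_nonneg_right (by linarith)
          positivity
      _ = (12 * Real.sqrt ((n : ℝ) * m) * ‖matCLM B‖ + 1) * (sMin W)⁻¹ * frobNorm (W - W') := by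
          ring
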